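/- With the same parametrization of the scattering direction, for each pair of indices i, j one has ∫_{-π}^{π} (v'_i - v_i)(v'_j - v_j) dφ = π sin⁴(θ/2)(2 u_i u_j - |u|² Π(u)_{ij}) + π |u|² Π(u)_{ij} sin²(θ/2), where Π(u) = I - û ⊗ û. -/

import Mathlib

open Real MeasureTheory

lemma integ_aux (a b c d e f : ℝ) :
    ∫ φ in (-π)..π, (a + b*Real.cos φ + c*Real.sin φ) * (d + e*Real.cos φ + f*Real.sin φ)
      = 2*π*(a*d) + π*(b*e) + π*(c*f) := by
  have h : ∀ φ : ℝ, (a + b*cos φ + c*sin φ)*(d + e*cos φ + f*sin φ)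
      = a*d + ((a*e+b*d)*cos φ + ((a*f+c*d)*sin φ + ((b*e)*cos φ^2 + ((c*f)*sin φ^2 + (b*f+c*e)*(sin φ*cos φ))))) := by
    intro φ; ring
  simp_rw [h]
  have hi : ∀ g : ℝ → ℝ, Continuous g → IntervalIntegrable g volume (-π) π :=
    fun g hg => hg.intervalIntegrable _ _
  rw [intervalIntegral.integral_add (hi _ (by fun_prop)) (hi _ (by fun_prop)),
      intervalIntegral.integral_add (hi _ (by fun_prop)) (hi _ (by fun_prop)),
      intervalIntegral.integral_add (hi _ (by fun_prop)) (hi _ (by fun_prop)),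
      intervalIntegral.integral_add (hi _ (by fun_prop)) (hi _ (by fun_prop)),
      intervalIntegral.integral_add (hi _ (by fun_prop)) (hi _ (by fun_prop))]
  simp only [intervalIntegral.integral_const_mul, intervalIntegral.integral_const,
    integral_cos, integral_sin, integral_cos_sq, integral_sin_sq, integral_sin_mul_cos₁]
  simp [Real.sin_pi, Real.cos_pi]
  ring

set_option maxHeartbeats 1000000 in
/-- The second angular moment of the velocity change:
`∫_{-π}^{π} (v'_i - v_i)(v'_j - v_j) dφ
  = π sin⁴(θ/2)(2 uᵢuⱼ - |u|² Pu(u)ᵢⱼ) + π |u|² Pu(u)ᵢⱼ sin²(θ/2)`,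
where `Pu(u) = I - û ⊗ û` and `k = j × û`. -/
theorem stmt_2 (u j k : EuclideanSpace ℝ (Fin 3)) (hu : u ≠ 0)
    (hj : ‖j‖ = 1) (huj : inner ℝ u j = (0:ℝ))
    (hk0 : k 0 = j 1 * (u 2 / ‖u‖) - j 2 * (u 1 / ‖u‖))
    (hk1 : k 1 = j 2 * (u 0 / ‖u‖) - j 0 * (u 2 / ‖u‖))
    (hk2 : k 2 = j 0 * (u 1 / ‖u‖) - j 1 * (u 0 / ‖u‖))
    (θ : ℝ) (hθ : θ ∈ Set.Icc 0 (π/2))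
    (σ : ℝ → EuclideanSpace ℝ (Fin 3))
    (hσ : ∀ φ, σ φ = Real.cos θ • (‖u‖⁻¹ • u) + Real.sin θ • (Real.cos φ • j + Real.sin φ • k))
    (vdiff : ℝ → EuclideanSpace ℝ (Fin 3))
    (hvdiff : ∀ φ, vdiff φ = (1/2 : ℝ) • (‖u‖ • σ φ - u))
    (Pu : Fin 3 → Fin 3 → ℝ)
    (hPu : ∀ i l, Pu i l = (if i = l then 1 else 0) - (u i / ‖u‖) * (u l / ‖u‖)) :
    ∀ i l : Fin 3,
      (∫ φ in (-π)..π, (vdiff φ i) * (vdiff φ l))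
        = π * Real.sin (θ/2)^4 * (2 * u i * u l - ‖u‖^2 * Pu i l)
          + π * ‖u‖^2 * Pu i l * Real.sin (θ/2)^2 := by
  have hn : ‖u‖ ≠ 0 := norm_ne_zero_iff.mpr hu
  have hnsq : ‖u‖^2 = u 0^2 + u 1^2 + u 2^2 := by
    rw [EuclideanSpace.norm_eq, Real.sq_sqrt (by positivity)]
    simp [Fin.sum_univ_three, sq]
  have hjsq : j 0^2 + j 1^2 + j 2^2 = 1 := by
    have h2 : ‖j‖^2 = j 0^2 + j 1^2 + j 2^2 := by
      rw [EuclideanSpace.norm_eq, Real.sq_sqrt (by positivity)]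
      simp [Fin.sum_univ_three, sq]
    rw [← h2, hj]; norm_num
  have horth : u 0 * j 0 + u 1 * j 1 + u 2 * j 2 = 0 := by
    rw [← huj, PiLp.inner_apply]
    simp [Fin.sum_univ_three, mul_comm]
  have hkey : ∀ i l, j i * j l + k i * k l = Pu i l := by
    intro i l
    rw [hPu]
    fin_cases i <;> fin_cases l <;>
      simp only [Fin.isValue, Fin.zero_eta, Fin.mk_one, Fin.reduceFinMk, hk0, hk1, hk2,
        if_true, if_false, Fin.reduceEq, ite_true, ite_false] <;>
      field_simp
    · linear_combination (j 0*j 0 - 1)*hnsq + (u 1^2 + u 2^2)*hjsq + (u 0*j 0 - u 1*j 1 - u 2*j 2)*horth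
    · linear_combination (j 0*j 1)*hnsq + (-(u 0*u 1))*hjsq + (j 0*u 1 + u 0*j 1)*horth
    · linear_combination (j 0*j 2)*hnsq + (-(u 0*u 2))*hjsq + (j 0*u 2 + u 0*j 2)*horth
    · linear_combination (j 1*j 0)*hnsq + (-(u 1*u 0))*hjsq + (j 1*u 0 + u 1*j 0)*horth
    · linear_combination (j 1*j 1 - 1)*hnsq + (u 0^2 + u 2^2)*hjsq + (u 1*j 1 - u 0*j 0 - u 2*j 2)*horth
    · linear_combination (j 1*j 2)*hnsq + (-(u 1*u 2))*hjsq + (j 1*u 2 + u 1*j 2)*horth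
    · linear_combination (j 2*j 0)*hnsq + (-(u 2*u 0))*hjsq + (j 2*u 0 + u 2*j 0)*horth
    · linear_combination (j 2*j 1)*hnsq + (-(u 2*u 1))*hjsq + (j 2*u 1 + u 2*j 1)*horth
    · linear_combination (j 2*j 2 - 1)*hnsq + (u 0^2 + u 1^2)*hjsq + (u 2*j 2 - u 0*j 0 - u 1*j 1)*horth
  have hv : ∀ (φ : ℝ) (i : Fin 3), vdiff φ i
      = (Real.cos θ - 1)/2 * u i + (‖u‖ * Real.sin θ / 2 * j i) * Real.cos φ
        + (‖u‖ * Real.sin θ / 2 * k i) * Real.sin φ := by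
    intro φ i
    rw [hvdiff, hσ]
    simp only [PiLp.smul_apply, PiLp.add_apply, PiLp.sub_apply, smul_eq_mul]
    field_simp
    ring
  intro i l
  have hrw : (∫ φ in (-π)..π, (vdiff φ i) * (vdiff φ l))
      = 2*π*((Real.cos θ - 1)/2 * u i * ((Real.cos θ - 1)/2 * u l))
        + π*((‖u‖ * Real.sin θ / 2 * j i) * (‖u‖ * Real.sin θ / 2 * j l))
        + π*((‖u‖ * Real.sin θ / 2 * k i) * (‖u‖ * Real.sin θ / 2 * k l)) := by
    simp_rw [hv]
    exact integ_aux _ _ _ _ _ _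
  rw [hrw]
  have hc2 : Real.cos (θ/2)^2 = 1 - Real.sin (θ/2)^2 := Real.cos_sq' (θ/2)
  have hcos : Real.cos θ = 1 - 2 * Real.sin (θ/2)^2 := by
    have h := Real.cos_two_mul (θ/2)
    rw [show 2*(θ/2) = θ by ring, hc2] at h
    linarith
  have hsin : Real.sin θ = 2 * Real.sin (θ/2) * Real.cos (θ/2) := by
    have h := Real.sin_two_mul (θ/2)
    rwa [show 2*(θ/2) = θ by ring] at h
  rw [hcos, hsin]
  linear_combination (π*‖u‖^2*Real.sin (θ/2)^2*Real.cos (θ/2)^2) * (hkey i l)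
    + (π*‖u‖^2*(Pu i l)*Real.sin (θ/2)^2) * hc2
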